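/- arXiv:2512.07592 — 2 statements merged into one kernel-verified Lean document; each statement's English description precedes it below -/
import Mathlib

section
/- Let G=(V,E) be a finite tree (a finite connected graph with no cycles). Then the co-2-plex polytope P(G) equals T(G). -/
open Finset
open scoped Classical

noncomputable section

variable {V : Type*} [Fintype V]

/-- A co-2-plex: a set of vertices inducing a subgraph of maximum degree at most 1. -/
def IsCo2Plex {α : Type*} (G : SimpleGraph α) (S : Finset α) : Prop :=
  ∀ u ∈ S, (S.filter fun v => G.Adj u v).card ≤ 1

/-- Incidence vector of a vertex set. -/
def chiV {α : Type*} (S : Finset α) : α → ℝ := fun v => if v ∈ S then 1 else 0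

/-- Incidence vector (on edges) of the set of edges with both endpoints in `S`. -/
def chiE {α : Type*} (G : SimpleGraph α) (S : Finset α) : G.edgeSet → ℝ :=
  fun e => if ∀ v ∈ (e : Sym2 α), v ∈ S then 1 else 0

/-- The co-2-plex polytope. -/
def co2PlexPolytope (G : SimpleGraph V) : Set (V → ℝ) :=
  convexHull ℝ {x | ∃ S : Finset V, IsCo2Plex G S ∧ x = chiV S}

/-- The extended co-2-plex polytope. -/
def co2PlexPolytopeExt (G : SimpleGraph V) : Set ((V → ℝ) × (G.edgeSet → ℝ)) :=
  convexHull ℝ {p | ∃ S : Finset V, IsCo2Plex G S ∧ p = (chiV S, chiE G S)}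

/-- δ(v): edges incident to `v`. -/
def inc (G : SimpleGraph V) (v : V) : Finset G.edgeSet :=
  univ.filter fun e => v ∈ (e : Sym2 V)

/-- E(W): edges with both endpoints in W. -/
def edgesIn (G : SimpleGraph V) (W : Finset V) : Finset G.edgeSet :=
  univ.filter fun e => ∀ v ∈ (e : Sym2 V), v ∈ W

/-- E(V \ W): edges with both endpoints outside W. -/
def edgesOut (G : SimpleGraph V) (W : Finset V) : Finset G.edgeSet :=
  univ.filter fun e => ∀ v ∈ (e : Sym2 V), v ∉ W

/-- δ(W): edges with exactly one endpoint in W. -/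
def edgesCut (G : SimpleGraph V) (W : Finset V) : Finset G.edgeSet :=
  univ.filter fun e => (∃ v ∈ (e : Sym2 V), v ∈ W) ∧ ∃ v ∈ (e : Sym2 V), v ∉ W

/-- The utter graph of `G`. -/
def utter (G : SimpleGraph V) : SimpleGraph (V ⊕ G.edgeSet) where
  Adj a b :=
    match a, b with
    | Sum.inl u, Sum.inl v => G.Adj u v
    | Sum.inl w, Sum.inr e => w ∈ (e : Sym2 V) ∨ ∃ z ∈ (e : Sym2 V), G.Adj w z
    | Sum.inr e, Sum.inl w => w ∈ (e : Sym2 V) ∨ ∃ z ∈ (e : Sym2 V), G.Adj w z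
    | Sum.inr e, Sum.inr f =>
        e ≠ f ∧ ((∃ v, v ∈ (e : Sym2 V) ∧ v ∈ (f : Sym2 V)) ∨
          ∃ a ∈ (e : Sym2 V), ∃ b ∈ (f : Sym2 V), G.Adj a b)
  symm := by
    constructor
    rintro (u | e) (v | f) h
    · exact h.symm
    · exact h
    · exact h
    · obtain ⟨hne, h⟩ := h
      refine ⟨hne.symm, ?_⟩
      rcases h with ⟨v, hv1, hv2⟩ | ⟨a, ha, b, hb, hab⟩
      · exact Or.inl ⟨v, hv2, hv1⟩
      · exact Or.inr ⟨b, hb, a, ha, hab.symm⟩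
  loopless := by
    constructor
    rintro (u | e) h
    · exact G.irrefl h
    · exact h.1 rfl

/-- An utter clique: a pair [W, F] whose union is a clique of the utter graph. -/
def IsUtterClique (G : SimpleGraph V) (W : Finset V) (F : Finset G.edgeSet) : Prop :=
  (utter G).IsClique (Sum.inl '' (W : Set V) ∪ Sum.inr '' (F : Set G.edgeSet))

/-- A maximal utter clique. -/
def IsMaxUtterClique (G : SimpleGraph V) (W : Finset V) (F : Finset G.edgeSet) : Prop :=
  IsUtterClique G W F ∧
    (∀ v ∉ W, ¬ IsUtterClique G (insert v W) F) ∧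
    (∀ e ∉ F, ¬ IsUtterClique G W (insert e F))

/-- The contraction G/F: vertices are the connected components of the spanning
subgraph (V, F); two components are adjacent iff some edge of `G` joins them. -/
def contract {α : Type*} (G : SimpleGraph α) (F : Set (Sym2 α)) :
    SimpleGraph (SimpleGraph.fromEdgeSet F).ConnectedComponent where
  Adj c d := c ≠ d ∧ ∃ u v, G.Adj u v ∧
      (SimpleGraph.fromEdgeSet F).connectedComponentMk u = c ∧
      (SimpleGraph.fromEdgeSet F).connectedComponentMk v = d
  symm := by
    constructor
    rintro c d ⟨hne, u, v, h, hu, hv⟩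
    exact ⟨hne.symm, v, u, h.symm, hv, hu⟩
  loopless := by
    constructor
    rintro c ⟨hne, _⟩
    exact hne rfl

/-- A graph is perfect if every induced subgraph has chromatic number equal to
its clique number. -/
def IsPerfect {α : Type*} (G : SimpleGraph α) : Prop :=
  ∀ s : Set α, (G.induce s).chromaticNumber = ((G.induce s).cliqueNum : ℕ∞)

/-- A graph is contraction perfect if all its contractions (by edge subsets) are perfect. -/
def ContractionPerfect (G : SimpleGraph V) : Prop :=
  ∀ F : Set (Sym2 V), F ⊆ G.edgeSet → IsPerfect (contract G F)

/-- Chordal: no induced cycle of length at least 4. -/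
def Chordal (G : SimpleGraph V) : Prop :=
  ∀ n, 4 ≤ n → IsEmpty (SimpleGraph.cycleGraph n ↪g G)

/-- Maximal clique (as a finset). -/
def IsMaxCliqueF (G : SimpleGraph V) (K : Finset V) : Prop :=
  G.IsClique (K : Set V) ∧ ∀ K' : Finset V, G.IsClique (K' : Set V) → K ⊆ K' → K = K'

/-- A 2-plex: every vertex of the induced subgraph has degree at least |K| - 2 in it. -/
def Is2Plex (G : SimpleGraph V) (K : Finset V) : Prop :=
  ∀ v ∈ K, K.card - 2 ≤ (K.filter fun u => G.Adj v u).card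

/-- α₂(G[W]): the maximum cardinality of a co-2-plex contained in `W`. -/
def co2plexNumOn (G : SimpleGraph V) (W : Finset V) : ℕ :=
  Finset.univ.sup fun S : Finset V => if S ⊆ W ∧ IsCo2Plex G S then S.card else 0

/-- Facet-defining inequality of a full-dimensional polytope in ℝ^α: a valid
inequality whose tight points contain `card α` affinely independent points. -/
def IsFacet {α : Type*} [Fintype α] (P : Set (α → ℝ)) (a : α → ℝ) (c : ℝ) : Prop :=
  (∀ x ∈ P, ∑ v, a v * x v ≤ c) ∧
  ∃ f : Fin (Fintype.card α) → (α → ℝ),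
    AffineIndependent ℝ f ∧ ∀ i, f i ∈ P ∧ ∑ v, a v * f i v = c

/-- The polytope T(G) given by bounds and the star inequalities. -/
def TPoly (G : SimpleGraph V) [DecidableRel G.Adj] : Set (V → ℝ) :=
  {x | (∀ v, 0 ≤ x v ∧ x v ≤ 1) ∧
    ∀ (w : V), ∀ W ⊆ G.neighborFinset w,
      ∑ v ∈ W, x v + ((W.card : ℝ) - 1) * x w ≤ (W.card : ℝ)}

/-- Total dual integrality of the system `A x ≤ b`. -/
def IsTDI {ι κ : Type*} [Fintype ι] [Fintype κ] (A : ι → κ → ℝ) (b : ι → ℝ) : Prop :=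
  ∀ c : κ → ℤ, ∀ m : ℝ,
    IsGreatest {t | ∃ x : κ → ℝ, (∀ i, ∑ j, A i j * x j ≤ b i) ∧ t = ∑ j, (c j : ℝ) * x j} m →
    ∃ π : ι → ℤ, (∀ i, 0 ≤ π i) ∧ (∀ j, ∑ i, (π i : ℝ) * A i j = (c j : ℝ)) ∧
      ∑ i, (π i : ℝ) * b i = m



namespace Stmt11Aux

/-- Splitting a nonnegative weight function: extract a sub-weight with prescribed total. -/
lemma exists_split {ι : Type*} (A : Finset ι) (f : ι → ℝ) (hf : ∀ i, 0 ≤ f i) :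
    ∀ s : ℝ, 0 ≤ s → s ≤ ∑ i ∈ A, f i →
    ∃ g : ι → ℝ, (∀ i, 0 ≤ g i ∧ g i ≤ f i) ∧ (∀ i ∉ A, g i = 0) ∧ ∑ i ∈ A, g i = s := by
  classical
  induction A using Finset.induction_on with
  | empty =>
    intro s h0 h1
    simp only [Finset.sum_empty] at h1
    exact ⟨0, fun i => ⟨le_rfl, hf i⟩, fun _ _ => rfl, by simp [le_antisymm h1 h0]⟩
  | @insert a A' ha ih =>
    intro s h0 h1
    rw [Finset.sum_insert ha] at h1
    by_cases hs : s ≤ f a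
    · refine ⟨fun i => if i = a then s else 0, ?_, ?_, ?_⟩
      · intro i; by_cases h : i = a <;> simp [h, h0, hs, hf i]
      · intro i hi; simp only [Finset.mem_insert, not_or] at hi; simp [hi.1]
      · rw [Finset.sum_insert ha, if_pos rfl]
        rw [Finset.sum_eq_zero (fun i hi => if_neg (by rintro rfl; exact ha hi))]
        ring
    · obtain ⟨g, hg1, hg2, hg3⟩ := ih (s - f a) (by linarith) (by linarith)
      refine ⟨fun i => if i = a then f a else g i, ?_, ?_, ?_⟩
      · intro i; by_cases h : i = a <;> simp [h, hf a, (hg1 i).1, (hg1 i).2]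
      · intro i hi; simp only [Finset.mem_insert, not_or] at hi
        simp [hi.1, hg2 i hi.2]
      · rw [Finset.sum_insert ha, if_pos rfl]
        rw [Finset.sum_congr rfl (fun i hi => if_neg (by rintro rfl; exact ha hi))]
        rw [hg3]; ring

variable {V : Type*} [Fintype V]

open SimpleGraph

/-- Membership characterization of the co-2-plex property (decidability-free). -/
lemma isCo2Plex_iff {G : SimpleGraph V} {S : Finset V} :
    IsCo2Plex G S ↔ ∀ u ∈ S, ∀ a ∈ S, ∀ b ∈ S, G.Adj u a → G.Adj u b → a = b := by
  unfold IsCo2Plex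
  constructor
  · intro h u hu a ha b hb hua hub
    have hc := h u hu
    rw [Finset.card_le_one] at hc
    exact hc a (Finset.mem_filter.mpr ⟨ha, hua⟩) b (Finset.mem_filter.mpr ⟨hb, hub⟩)
  · intro h u hu
    rw [Finset.card_le_one]
    intro a ha b hb
    rw [Finset.mem_filter] at ha hb
    exact h u hu a ha.1 b hb.1 ha.2 hb.2

/-- Indicator with a pinned (classical) decidability instance. -/
noncomputable def ind (p : Prop) (r : ℝ) : ℝ := if p then r else 0

lemma ind_pos {p : Prop} (r : ℝ) (h : p) : ind p r = r := if_pos h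
lemma ind_neg {p : Prop} (r : ℝ) (h : ¬ p) : ind p r = 0 := if_neg h
lemma ind_zero (p : Prop) : ind p (0:ℝ) = 0 := by unfold ind; split <;> rfl
lemma ind_nonneg {p : Prop} {r : ℝ} (h : 0 ≤ r) : 0 ≤ ind p r := by
  unfold ind; split
  · exact h
  · exact le_rfl
lemma ind_congr {p q : Prop} (r : ℝ) (h : p ↔ q) : ind p r = ind q r := by
  by_cases hp : p
  · rw [ind_pos _ hp, ind_pos _ (h.mp hp)]
  · rw [ind_neg _ hp, ind_neg _ (fun hq => hp (h.mpr hq))]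

lemma sum_filter_ind (p : Finset V → Prop) (D : DecidablePred p) (f : Finset V → ℝ) :
    ∑ S ∈ @Finset.filter _ p D univ, f S = ∑ S : Finset V, ind (p S) (f S) := by
  rw [Finset.sum_filter]
  apply Finset.sum_congr rfl
  intro S _
  by_cases h : p S
  · rw [if_pos h, ind_pos _ h]
  · rw [if_neg h, ind_neg _ h]

lemma sum_ind_drop (f : Finset V → ℝ) (q p : Finset V → Prop)
    (h : ∀ S, q S → ¬ p S → f S = 0) :
    ∑ S : Finset V, ind (q S ∧ p S) (f S) = ∑ S : Finset V, ind (q S) (f S) := by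
  apply Finset.sum_congr rfl
  intro S _
  by_cases hq : q S
  · by_cases hp : p S
    · rw [ind_pos _ ⟨hq, hp⟩, ind_pos _ hq]
    · rw [ind_neg _ (fun hc => hp hc.2), ind_pos _ hq, h S hq hp]
  · rw [ind_neg _ (fun hc => hq hc.1), ind_neg _ hq]

lemma sum_ind_all (f : Finset V → ℝ) (p : Finset V → Prop) (h : ∀ S, ¬ p S → f S = 0) :
    ∑ S : Finset V, ind (p S) (f S) = ∑ S : Finset V, f S := by
  apply Finset.sum_congr rfl
  intro S _
  by_cases hp : p S
  · rw [ind_pos _ hp]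
  · rw [ind_neg _ hp, h S hp]

/-- Reindexing sums over finsets containing `v` by erasing `v`. -/
lemma sum_ind_erase (v : V) (p : Finset V → Prop) (F : Finset V → ℝ)
    (hp : ∀ S : Finset V, v ∈ S → (p S ↔ p (S.erase v))) :
    ∑ S : Finset V, ind (v ∈ S ∧ p S) (F (S.erase v))
      = ∑ S : Finset V, ind (v ∉ S ∧ p S) (F S) := by
  have e : ∀ S : Finset V, ind (v ∈ S ∧ p S) (F (S.erase v))
      = ind (v ∈ S ∧ p (S.erase v)) (F (S.erase v)) := fun S =>
    ind_congr _ ⟨fun h => ⟨h.1, (hp S h.1).mp h.2⟩, fun h => ⟨h.1, (hp S h.1).mpr h.2⟩⟩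
  rw [Finset.sum_congr rfl (fun S _ => e S)]
  rw [← sum_filter_ind (fun S : Finset V => v ∈ S ∧ p (S.erase v))
    (fun S => Classical.propDecidable _) (fun S => F (S.erase v))]
  rw [← sum_filter_ind (fun S : Finset V => v ∉ S ∧ p S)
    (fun S => Classical.propDecidable _) F]
  refine Finset.sum_nbij' (fun S : Finset V => S.erase v) (fun S : Finset V => insert v S)
      ?_ ?_ ?_ ?_ ?_ <;>
    intro S hS <;>
    simp only [Finset.mem_filter, Finset.mem_univ, true_and] at hS ⊢
  · exact ⟨Finset.notMem_erase v S, hS.2⟩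
  · exact ⟨Finset.mem_insert_self v S, by rw [Finset.erase_insert hS.1]; exact hS.2⟩
  · exact Finset.insert_erase hS.1
  · exact Finset.erase_insert hS.1

lemma sum_ind_erase' (v : V) (F : Finset V → ℝ) :
    ∑ S : Finset V, ind (v ∈ S) (F (S.erase v)) = ∑ S : Finset V, ind (v ∉ S) (F S) := by
  have h1 : ∀ S : Finset V, ind (v ∈ S) (F (S.erase v)) = ind (v ∈ S ∧ True) (F (S.erase v)) :=
    fun S => ind_congr _ ⟨fun h => ⟨h, trivial⟩, fun h => h.1⟩
  have h2 : ∀ S : Finset V, ind (v ∉ S ∧ True) (F S) = ind (v ∉ S) (F S) :=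
    fun S => ind_congr _ ⟨fun h => h.1, fun h => ⟨h, trivial⟩⟩
  rw [Finset.sum_congr rfl (fun S _ => h1 S),
    sum_ind_erase v (fun _ => True) F (fun _ _ => Iff.rfl),
    Finset.sum_congr rfl (fun S _ => h2 S)]

/-- Incidence vectors of co-2-plexes satisfy the star inequalities. -/
lemma chiV_mem_TPoly (G : SimpleGraph V) [DecidableRel G.Adj] {S : Finset V}
    (hS : IsCo2Plex G S) : chiV S ∈ TPoly G := by
  constructor
  · intro v; unfold chiV; split <;> norm_num
  · intro w W hW
    have hsum : ∑ v ∈ W, chiV S v = ((W.filter (fun v => v ∈ S)).card : ℝ) := by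
      unfold chiV; rw [Finset.sum_boole]
    by_cases hw : w ∈ S
    · have hc : (W.filter (fun v => v ∈ S)).card ≤ 1 := by
        rw [Finset.card_le_one]
        intro a ha b hb
        rw [Finset.mem_filter] at ha hb
        have haw : G.Adj w a := (SimpleGraph.mem_neighborFinset G w a).mp (hW ha.1)
        have hbw : G.Adj w b := (SimpleGraph.mem_neighborFinset G w b).mp (hW hb.1)
        exact isCo2Plex_iff.mp hS w hw a ha.2 b hb.2 haw hbw
      have hc' : ((W.filter (fun v => v ∈ S)).card : ℝ) ≤ 1 := by exact_mod_cast hc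
      have hχ : chiV S w = 1 := if_pos hw
      rw [hsum, hχ]; linarith
    · have hc : (W.filter (fun v => v ∈ S)).card ≤ W.card := Finset.card_le_card (Finset.filter_subset _ _)
      have hc' : ((W.filter (fun v => v ∈ S)).card : ℝ) ≤ (W.card : ℝ) := by exact_mod_cast hc
      have hχ : chiV S w = 0 := if_neg hw
      rw [hsum, hχ]; linarith

lemma convex_TPoly (G : SimpleGraph V) [DecidableRel G.Adj] : Convex ℝ (TPoly G) := by
  intro x hx y hy a b ha hb hab
  constructor
  · intro v
    have h1 := (hx.1 v).1; have h2 := (hx.1 v).2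
    have h3 := (hy.1 v).1; have h4 := (hy.1 v).2
    constructor
    · have : (0:ℝ) ≤ a * x v + b * y v := by nlinarith
      simpa using this
    · have : a * x v + b * y v ≤ 1 := by nlinarith
      simpa using this
  · intro w W hW
    have h1 := hx.2 w W hW
    have h2 := hy.2 w W hW
    have hsum : ∑ v ∈ W, (a • x + b • y) v = a * ∑ v ∈ W, x v + b * ∑ v ∈ W, y v := by
      simp only [Pi.add_apply, Pi.smul_apply, smul_eq_mul]
      rw [Finset.sum_add_distrib, Finset.mul_sum, Finset.mul_sum]
    rw [hsum]
    have hw : (a • x + b • y) w = a * x w + b * y w := by simp [smul_eq_mul]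
    rw [hw]
    nlinarith [mul_le_mul_of_nonneg_left h1 ha, mul_le_mul_of_nonneg_left h2 hb]

lemma TPoly_mono (G : SimpleGraph V) [DecidableRel G.Adj] {x y : V → ℝ} (hx : x ∈ TPoly G)
    (h0 : ∀ v, 0 ≤ y v) (h1 : ∀ v, y v ≤ x v) : y ∈ TPoly G := by
  constructor
  · intro v; exact ⟨h0 v, (h1 v).trans (hx.1 v).2⟩
  · intro w W hW
    rcases W.eq_empty_or_nonempty with rfl | hne
    · simp only [Finset.sum_empty, Finset.card_empty, Nat.cast_zero]
      have := h0 w; nlinarith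
    · have hc : (1:ℝ) ≤ (W.card : ℝ) := by exact_mod_cast hne.card_pos
      have hcon := hx.2 w W hW
      have hsum : ∑ v ∈ W, y v ≤ ∑ v ∈ W, x v := Finset.sum_le_sum (fun i _ => h1 i)
      have hmul : ((W.card : ℝ) - 1) * y w ≤ ((W.card : ℝ) - 1) * x w :=
        mul_le_mul_of_nonneg_left (h1 w) (by linarith)
      linarith

/-- If `s(w,c)` is an edge of a path starting at `w`, then `c` is the second vertex. -/
lemma walk_snd_eq {G : SimpleGraph V} {w u c : V} (p : G.Walk w u) (hp : p.IsPath)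
    (h : s(w, c) ∈ p.edges) : p.getVert 1 = c := by
  cases p with
  | nil => simp at h
  | @cons _ b _ hadj q =>
    rw [SimpleGraph.Walk.edges_cons, List.mem_cons] at h
    rcases h with h | h
    · rw [Sym2.eq_iff] at h
      rcases h with ⟨-, rfl⟩ | ⟨hwb, -⟩
      · rw [SimpleGraph.Walk.getVert_cons_succ, SimpleGraph.Walk.getVert_zero]
      · exact absurd hwb.symm hadj.ne'
    · exfalso
      have hw : w ∈ q.support := SimpleGraph.Walk.fst_mem_support_of_mem_edges q h
      rw [SimpleGraph.Walk.cons_isPath_iff] at hp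
      exact hp.2 hw

/-- In an acyclic graph, every nonempty vertex finset contains a vertex with at
most one neighbor inside the finset. -/
lemma exists_leaf {G : SimpleGraph V} [DecidableRel G.Adj] (hG : G.IsAcyclic)
    (U : Finset V) (hU : U.Nonempty) :
    ∃ v ∈ U, (U.filter (fun u => G.Adj v u)).card ≤ 1 := by
  classical
  obtain ⟨u0, hu0⟩ := hU
  -- maximal length of a path inside U
  set P : ℕ → Prop := fun n => ∃ (a b : V) (p : G.Walk a b),
    p.IsPath ∧ (∀ z ∈ p.support, z ∈ U) ∧ p.length = n with hP
  have hP0 : P 0 := ⟨u0, u0, SimpleGraph.Walk.nil, by simp, by simpa using hu0, rfl⟩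
  have hPbd : ∀ n, P n → n < Fintype.card V := by
    rintro n ⟨a, b, p, hp, -, rfl⟩; exact hp.length_lt
  set T : Finset ℕ := (Finset.range (Fintype.card V)).filter P with hT
  have hTne : T.Nonempty := ⟨0, by simp [hT, Finset.mem_range, hP0, hPbd 0 hP0]⟩
  set N := T.max' hTne with hN
  have hNP : P N := (Finset.mem_filter.mp (T.max'_mem hTne)).2
  have hNmax : ∀ n, P n → n ≤ N := by
    intro n hn
    exact T.le_max' n (Finset.mem_filter.mpr ⟨Finset.mem_range.mpr (hPbd n hn), hn⟩)
  obtain ⟨a, b, p, hp, hpU, hplen⟩ := hNP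
  set r := p.reverse with hr
  have hrp : r.IsPath := hp.reverse
  have hrU : ∀ z ∈ r.support, z ∈ U := by
    intro z hz; apply hpU; rwa [SimpleGraph.Walk.support_reverse, List.mem_reverse] at hz
  refine ⟨b, hpU b p.end_mem_support, ?_⟩
  have hsub : U.filter (fun u => G.Adj b u) ⊆ {r.getVert 1} := by
    intro c hc
    rw [Finset.mem_filter] at hc
    obtain ⟨hcU, hbc⟩ := hc
    by_cases hcs : c ∈ r.support
    · have hq : (r.takeUntil c hcs).IsPath := hrp.takeUntil hcs
      by_cases he : s(c, b) ∈ (r.takeUntil c hcs).edges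
      · have he' : s(b, c) ∈ r.edges := by
          rw [Sym2.eq_swap]
          exact SimpleGraph.Walk.edges_takeUntil_subset r hcs he
        rw [Finset.mem_singleton]
        exact (walk_snd_eq r hrp he').symm
      · exfalso
        have hcyc : (SimpleGraph.Walk.cons hbc.symm (r.takeUntil c hcs)).IsCycle :=
          (SimpleGraph.Walk.cons_isCycle_iff _ hbc.symm).mpr ⟨hq, he⟩
        exact hG _ hcyc
    · exfalso
      have hpath : (SimpleGraph.Walk.cons hbc.symm r).IsPath := by
        rw [SimpleGraph.Walk.cons_isPath_iff]; exact ⟨hrp, hcs⟩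
      have hlen : (SimpleGraph.Walk.cons hbc.symm r).length = N + 1 := by
        rw [SimpleGraph.Walk.length_cons, hr, SimpleGraph.Walk.length_reverse, hplen]
      have : P (N + 1) := ⟨c, a, _, hpath, ?_, hlen⟩
      · exact absurd (hNmax _ this) (by omega)
      · intro z hz
        rw [SimpleGraph.Walk.support_cons, List.mem_cons] at hz
        rcases hz with rfl | hz
        · exact hcU
        · exact hrU z hz
  calc (U.filter (fun u => G.Adj b u)).card ≤ ({r.getVert 1} : Finset V).card :=
        Finset.card_le_card hsub
    _ = 1 := Finset.card_singleton _

/-- Inserting an "addable" vertex preserves the co-2-plex property. -/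
lemma insert_co2plex {G : SimpleGraph V} {S : Finset V}
    (hS : IsCo2Plex G S) (v : V)
    (hdeg : ∀ a ∈ S, ∀ b ∈ S, G.Adj v a → G.Adj v b → a = b)
    (hsat : ∀ u ∈ S, G.Adj v u → ∀ z ∈ S, ¬ G.Adj u z) :
    IsCo2Plex G (insert v S) := by
  rw [isCo2Plex_iff] at hS ⊢
  intro u hu a ha b hb hua hub
  rw [Finset.mem_insert] at hu ha hb
  rcases hu with rfl | hu
  · rcases ha with rfl | ha
    · exact absurd hua (G.irrefl)
    · rcases hb with rfl | hb
      · exact absurd hub (G.irrefl)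
      · exact hdeg a ha b hb hua hub
  · rcases ha with rfl | ha
    · rcases hb with rfl | hb
      · rfl
      · exact absurd hub (hsat u hu hua.symm b hb)
    · rcases hb with rfl | hb
      · exact absurd hua (hsat u hu hub.symm a ha)
      · exact hS u hu a ha b hb hua hub

/-- Key decomposition lemma: every point of `T(G)` supported on `U` is a convex
combination of co-2-plexes inside `U`, with minimal pairwise edge overlaps. -/
lemma key (G : SimpleGraph V) [DecidableRel G.Adj] (hG : G.IsAcyclic) :
    ∀ U : Finset V, ∀ x : V → ℝ, x ∈ TPoly G → (∀ v ∉ U, x v = 0) →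
    ∃ μ : Finset V → ℝ,
      (∀ S, 0 ≤ μ S) ∧ (∑ S : Finset V, μ S = 1) ∧
      (∀ S, μ S ≠ 0 → IsCo2Plex G S ∧ S ⊆ U) ∧
      (∀ u : V, ∑ S ∈ univ.filter (fun S : Finset V => u ∈ S), μ S = x u) ∧
      (∀ u w : V, G.Adj u w →
        ∑ S ∈ univ.filter (fun S : Finset V => u ∈ S ∧ w ∈ S), μ S
          = max 0 (x u + x w - 1)) := by
  intro U
  induction U using Finset.strongInduction with
  | _ U ih =>
    intro x hx hx0
    rcases U.eq_empty_or_nonempty with rfl | hUne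
    · -- base case : U = ∅, so x = 0
      have hxz : ∀ u, x u = 0 := fun u => hx0 u (Finset.notMem_empty u)
      refine ⟨fun S => if S = ∅ then 1 else 0, ?_, ?_, ?_, ?_, ?_⟩
      · intro S; dsimp only; split <;> norm_num
      · simp
      · intro S hS
        dsimp only at hS
        have : S = ∅ := by by_contra h; exact hS (if_neg h)
        subst this
        exact ⟨fun u hu => absurd hu (Finset.notMem_empty u), le_rfl⟩
      · intro u
        rw [hxz u]
        apply Finset.sum_eq_zero
        intro S hS
        rw [Finset.mem_filter] at hS
        have hne : S ≠ ∅ := by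
          intro h; rw [h] at hS; exact Finset.notMem_empty u hS.2
        exact if_neg hne
      · intro u w _
        rw [hxz u, hxz w]
        have hmax : max 0 ((0:ℝ) + 0 - 1) = 0 := max_eq_left (by norm_num)
        rw [hmax]
        apply Finset.sum_eq_zero
        intro S hS
        rw [Finset.mem_filter] at hS
        have hne : S ≠ ∅ := by
          intro h; rw [h] at hS; exact Finset.notMem_empty u hS.2.1
        exact if_neg hne
    · -- inductive step
      obtain ⟨v, hvU, hvdeg⟩ := exists_leaf hG U hUne
      set U' := U.erase v with hU'def
      have hU'ss : U' ⊂ U := Finset.erase_ssubset hvU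
      set x' := Function.update x v 0 with hx'def
      have hx'mem : x' ∈ TPoly G := by
        apply TPoly_mono G hx
        · intro u; by_cases h : u = v
          · subst h; rw [hx'def, Function.update_self]
          · rw [hx'def, Function.update_of_ne h]; exact (hx.1 u).1
        · intro u; by_cases h : u = v
          · subst h; rw [hx'def, Function.update_self]; exact (hx.1 u).1
          · rw [hx'def, Function.update_of_ne h]
      have hx'0 : ∀ u ∉ U', x' u = 0 := by
        intro u hu
        by_cases h : u = v
        · subst h; rw [hx'def]; exact Function.update_self _ 0 x
        · rw [hx'def, Function.update_of_ne h]
          apply hx0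
          intro huU
          exact hu (Finset.mem_erase.mpr ⟨h, huU⟩)
      obtain ⟨μ', h0', hsum', hsupp', hmarg', hedge'⟩ := ih U' hU'ss x' hx'mem hx'0
      have hvsupp : ∀ S, μ' S ≠ 0 → v ∉ S := by
        intro S h hv
        exact Finset.notMem_erase v U ((hsupp' S h).2 hv)
      have hμ'v : ∀ S : Finset V, v ∈ S → μ' S = 0 := by
        intro S hv; by_contra h; exact hvsupp S h hv
      set t := x v with htdef
      have ht0 : 0 ≤ t := (hx.1 v).1
      have ht1 : t ≤ 1 := (hx.1 v).2
      have hx'ne : ∀ u : V, u ≠ v → x' u = x u := by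
        intro u h; rw [hx'def, Function.update_of_ne h]
      have hx'v : x' v = 0 := by rw [hx'def, Function.update_self]
      -- ind versions of the IH conclusions
      have hmargI : ∀ u : V, ∑ S : Finset V, ind (u ∈ S) (μ' S) = x' u := by
        intro u
        have h := hmarg' u
        rwa [sum_filter_ind _ _ _] at h
      have hedgeI : ∀ u w : V, G.Adj u w →
          ∑ S : Finset V, ind (u ∈ S ∧ w ∈ S) (μ' S) = max 0 (x' u + x' w - 1) := by
        intro u w hadj
        have h := hedge' u w hadj
        rwa [sum_filter_ind _ _ _] at h
      -- construct ρ : the part of μ' to which v gets added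
      have hρex : ∃ ρ : Finset V → ℝ,
          (∀ S, 0 ≤ ρ S ∧ ρ S ≤ μ' S) ∧ (∑ S : Finset V, ρ S = t) ∧
          (∀ S, ρ S ≠ 0 → IsCo2Plex G (insert v S)) ∧
          (∀ u : V, G.Adj v u →
            ∑ S : Finset V, ind (u ∈ S) (ρ S) = max 0 (t + x u - 1)) := by
        rcases Nat.le_one_iff_eq_zero_or_eq_one.mp hvdeg with hc0 | hc1
        · -- v has no neighbor in U
          have hNv : U.filter (fun u => G.Adj v u) = ∅ := Finset.card_eq_zero.mp hc0
          have hnadj : ∀ u ∈ U, ¬ G.Adj v u := by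
            intro u hu hadj
            have h : u ∈ U.filter (fun u => G.Adj v u) := Finset.mem_filter.mpr ⟨hu, hadj⟩
            rw [hNv] at h
            exact Finset.notMem_empty u h
          obtain ⟨ρ, hρb, -, hρs⟩ :=
            exists_split Finset.univ μ' h0' t ht0 (by rw [hsum']; exact ht1)
          have hρμ : ∀ S, ρ S ≠ 0 → μ' S ≠ 0 := by
            intro S h hh
            exact h (le_antisymm (hh ▸ (hρb S).2) (hρb S).1)
          refine ⟨ρ, hρb, hρs, ?_, ?_⟩
          · intro S hS
            have hμ'ne : μ' S ≠ 0 := hρμ S hS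
            have hSU : S ⊆ U := (hsupp' S hμ'ne).2.trans (Finset.erase_subset v U)
            apply insert_co2plex (hsupp' S hμ'ne).1 v
            · intro a ha _ _ hva _
              exact absurd hva (hnadj a (hSU ha))
            · intro u hu hvu
              exact absurd hvu (hnadj u (hSU hu))
          · intro u hadj
            have huU : u ∉ U := fun h => hnadj u h hadj
            have hxu : x u = 0 := hx0 u huU
            rw [hxu]
            have hmax : max 0 (t + 0 - 1) = 0 := max_eq_left (by linarith)
            rw [hmax]
            apply Finset.sum_eq_zero
            intro S _
            by_cases hS : u ∈ S
            · rw [ind_pos _ hS]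
              by_contra h
              exact huU ((hsupp' S (hρμ S h)).2.trans (Finset.erase_subset v U) hS)
            · exact ind_neg _ hS
        · -- v has exactly one neighbor w in U
          obtain ⟨w, hw⟩ := Finset.card_eq_one.mp hc1
          have hwmem : w ∈ U.filter (fun u => G.Adj v u) := hw ▸ Finset.mem_singleton_self w
          have hvw : G.Adj v w := (Finset.mem_filter.mp hwmem).2
          have hwU : w ∈ U := (Finset.mem_filter.mp hwmem).1
          have hwv : w ≠ v := fun h => G.irrefl (h ▸ hvw)
          have honly : ∀ u ∈ U, G.Adj v u → u = w := by
            intro u hu hadj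
            have h : u ∈ U.filter (fun u => G.Adj v u) := Finset.mem_filter.mpr ⟨hu, hadj⟩
            rw [hw] at h
            exact Finset.mem_singleton.mp h
          have hxw1 : x w ≤ 1 := (hx.1 w).2
          have hx'w : x' w = x w := hx'ne w hwv
          -- the quantity B
          set W0 : Finset V := (G.neighborFinset w).filter (fun u => u ≠ v ∧ 1 - x w < x u)
            with hW0def
          set B : ℝ := ∑ u ∈ G.neighborFinset w, max 0 (x' w + x' u - 1) with hBdef
          have hBW0 : B = ∑ u ∈ W0, (x w + x u - 1) := by
            rw [hBdef]
            have h1 : ∑ u ∈ G.neighborFinset w, max 0 (x' w + x' u - 1)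
                = ∑ u ∈ W0, max 0 (x' w + x' u - 1) := by
              symm
              apply Finset.sum_subset (Finset.filter_subset _ _)
              intro u hu hnu
              have hcond : ¬ (u ≠ v ∧ 1 - x w < x u) := by
                intro hcc
                exact hnu (Finset.mem_filter.mpr ⟨hu, hcc⟩)
              rw [not_and_or, not_not, not_lt] at hcond
              by_cases huv : u = v
              · subst huv; rw [hx'v, hx'w]
                exact max_eq_left (by linarith)
              · rcases hcond with hcc | hle
                · exact absurd hcc huv
                · rw [hx'w, hx'ne u huv]
                  exact max_eq_left (by linarith)
            rw [h1]
            apply Finset.sum_congr rfl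
            intro u hu
            rw [hW0def, Finset.mem_filter] at hu
            rw [hx'w, hx'ne u hu.2.1]
            exact max_eq_right (by linarith [hu.2.2])
          have hvW0 : v ∉ W0 := by
            rw [hW0def, Finset.mem_filter]
            rintro ⟨-, h, -⟩
            exact h rfl
          have htB : t + B ≤ 1 := by
            have hWsub : insert v W0 ⊆ G.neighborFinset w := by
              intro u hu
              rcases Finset.mem_insert.mp hu with rfl | hu
              · exact (SimpleGraph.mem_neighborFinset G w u).mpr hvw.symm
              · rw [hW0def] at hu; exact Finset.filter_subset _ _ hu
            have hcon := hx.2 w (insert v W0) hWsub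
            rw [Finset.sum_insert hvW0, Finset.card_insert_of_notMem hvW0] at hcon
            have hsum : ∑ u ∈ W0, (x w + x u - 1)
                = (W0.card : ℝ) * x w + ∑ u ∈ W0, x u - W0.card := by
              rw [Finset.sum_sub_distrib, Finset.sum_add_distrib, Finset.sum_const,
                Finset.sum_const]
              push_cast
              ring
            rw [hBW0, hsum]
            push_cast at hcon ⊢
            linarith
          -- split μ' into three classes at w
          set μ1 : Finset V → ℝ := fun S => ind (w ∉ S) (μ' S) with hμ1def
          set μ2 : Finset V → ℝ :=
            fun S => ind (w ∈ S ∧ ∀ u ∈ S, ¬ G.Adj w u) (μ' S) with hμ2def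
          set μ3 : Finset V → ℝ :=
            fun S => ind (w ∈ S ∧ ∃ u ∈ S, G.Adj w u) (μ' S) with hμ3def
          have hμ1nn : ∀ S, 0 ≤ μ1 S := fun S => ind_nonneg (h0' S)
          have hμ2nn : ∀ S, 0 ≤ μ2 S := fun S => ind_nonneg (h0' S)
          have hdecomp : ∀ S, μ' S = μ1 S + μ2 S + μ3 S := by
            intro S
            simp only [hμ1def, hμ2def, hμ3def, ind]
            by_cases h1 : w ∈ S
            · by_cases h2 : ∃ u ∈ S, G.Adj w u
              · obtain ⟨u0, hu0, hadj0⟩ := h2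
                rw [if_neg (not_not_intro h1),
                  if_neg (fun hc => hc.2 u0 hu0 hadj0),
                  if_pos ⟨h1, ⟨u0, hu0, hadj0⟩⟩]
                ring
              · rw [if_neg (not_not_intro h1),
                  if_pos ⟨h1, fun u hu hadj => h2 ⟨u, hu, hadj⟩⟩,
                  if_neg (fun hc => h2 hc.2)]
                ring
            · rw [if_pos h1, if_neg (fun hc => h1 hc.1), if_neg (fun hc => h1 hc.1)]
              ring
          have hM1 : ∑ S : Finset V, μ1 S = 1 - x w := by
            have epoint : ∀ S : Finset V, μ1 S = μ' S - ind (w ∈ S) (μ' S) := by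
              intro S
              simp only [hμ1def, ind]
              by_cases h : w ∈ S
              · rw [if_neg (not_not_intro h), if_pos h]; ring
              · rw [if_pos h, if_neg h]; ring
            rw [Finset.sum_congr rfl (fun S _ => epoint S), Finset.sum_sub_distrib,
              hsum', hmargI w, hx'w]
          have hM3 : ∑ S : Finset V, μ3 S = B := by
            have step : ∀ S : Finset V, μ3 S
                = ∑ u ∈ G.neighborFinset w, ind (w ∈ S ∧ u ∈ S) (μ' S) := by
              intro S
              simp only [hμ3def]
              by_cases hS0 : μ' S = 0
              · rw [hS0, ind_zero]
                symm; apply Finset.sum_eq_zero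
                intro u _
                exact ind_zero _
              · by_cases hwS : w ∈ S
                · have hco := (hsupp' S hS0).1
                  by_cases hex : ∃ u ∈ S, G.Adj w u
                  · rw [ind_pos _ ⟨hwS, hex⟩]
                    obtain ⟨u0, hu0, hadj0⟩ := hex
                    have huniq : ∀ u, u ∈ G.neighborFinset w → ((w ∈ S ∧ u ∈ S) ↔ u = u0) := by
                      intro u hu
                      constructor
                      · intro h
                        exact isCo2Plex_iff.mp hco w hwS u h.2 u0 hu0
                          ((SimpleGraph.mem_neighborFinset G w u).mp hu) hadj0
                      · rintro rfl; exact ⟨hwS, hu0⟩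
                    have hmem0 : u0 ∈ G.neighborFinset w :=
                      (SimpleGraph.mem_neighborFinset G w u0).mpr hadj0
                    rw [Finset.sum_congr rfl (fun u hu => ind_congr _ (huniq u hu))]
                    symm
                    rw [Finset.sum_eq_single u0 (fun b _ hb => ind_neg _ hb)
                      (fun h => absurd hmem0 h)]
                    exact ind_pos _ rfl
                  · rw [ind_neg _ (fun hc => hex hc.2)]
                    symm; apply Finset.sum_eq_zero
                    intro u hu
                    apply ind_neg
                    intro hc
                    exact hex ⟨u, hc.2, (SimpleGraph.mem_neighborFinset G w u).mp hu⟩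
                · rw [ind_neg _ (fun hc => hwS hc.1)]
                  symm; apply Finset.sum_eq_zero
                  intro u _
                  exact ind_neg _ (fun hc => hwS hc.1)
            rw [Finset.sum_congr rfl (fun S _ => step S), Finset.sum_comm, hBdef]
            apply Finset.sum_congr rfl
            intro u hu
            rw [hedgeI w u ((SimpleGraph.mem_neighborFinset G w u).mp hu), hx'w]
          have hM2 : ∑ S : Finset V, μ2 S = x w - B := by
            have e5 : ∑ S : Finset V, μ' S = ∑ S : Finset V, (μ1 S + μ2 S + μ3 S) :=
              Finset.sum_congr rfl (fun S _ => hdecomp S)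
            rw [Finset.sum_add_distrib, Finset.sum_add_distrib, hM1, hM3, hsum'] at e5
            linarith
          set m := max 0 (t + x w - 1) with hmdef
          have hm0 : 0 ≤ m := le_max_left _ _
          have hmlb : t + x w - 1 ≤ m := le_max_right _ _
          have hmt : m ≤ t := max_le ht0 (by linarith)
          have hM2nn : 0 ≤ x w - B := by
            rw [← hM2]; exact Finset.sum_nonneg (fun S _ => hμ2nn S)
          have hmM2 : m ≤ x w - B := max_le hM2nn (by linarith)
          have htm : t - m ≤ 1 - x w := by linarith
          obtain ⟨ν₁, hν₁b, -, hν₁s⟩ :=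
            exists_split Finset.univ μ2 hμ2nn m hm0 (by rw [hM2]; exact hmM2)
          obtain ⟨ν₂, hν₂b, -, hν₂s⟩ :=
            exists_split Finset.univ μ1 hμ1nn (t - m) (by linarith) (by rw [hM1]; exact htm)
          have hν₁supp : ∀ S : Finset V, ν₁ S ≠ 0 →
              (w ∈ S ∧ ∀ u ∈ S, ¬ G.Adj w u) ∧ μ' S ≠ 0 := by
            intro S h
            have hμ2ne : μ2 S ≠ 0 := fun hh => h (le_antisymm (hh ▸ (hν₁b S).2) (hν₁b S).1)
            simp only [hμ2def] at hμ2ne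
            by_cases hc : w ∈ S ∧ ∀ u ∈ S, ¬ G.Adj w u
            · rw [ind_pos _ hc] at hμ2ne; exact ⟨hc, hμ2ne⟩
            · rw [ind_neg _ hc] at hμ2ne; exact absurd rfl hμ2ne
          have hν₂supp : ∀ S : Finset V, ν₂ S ≠ 0 → (w ∉ S) ∧ μ' S ≠ 0 := by
            intro S h
            have hμ1ne : μ1 S ≠ 0 := fun hh => h (le_antisymm (hh ▸ (hν₂b S).2) (hν₂b S).1)
            simp only [hμ1def] at hμ1ne
            by_cases hc : w ∉ S
            · rw [ind_pos _ hc] at hμ1ne; exact ⟨hc, hμ1ne⟩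
            · rw [ind_neg _ hc] at hμ1ne; exact absurd rfl hμ1ne
          refine ⟨fun S => ν₁ S + ν₂ S, ?_, ?_, ?_, ?_⟩
          · intro S
            show 0 ≤ ν₁ S + ν₂ S ∧ ν₁ S + ν₂ S ≤ μ' S
            refine ⟨add_nonneg (hν₁b S).1 (hν₂b S).1, ?_⟩
            have h1 := (hν₁b S).2
            have h2 := (hν₂b S).2
            have hm1 : μ1 S ≤ μ' S := by
              simp only [hμ1def, ind]; split
              · exact le_rfl
              · exact h0' S
            have hm2 : μ2 S ≤ μ' S := by
              simp only [hμ2def, ind]; split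
              · exact le_rfl
              · exact h0' S
            by_cases hc : w ∈ S
            · have hz : μ1 S = 0 := by
                simp only [hμ1def]; exact ind_neg _ (not_not_intro hc)
              have := (hν₁b S).1; have := (hν₂b S).1
              linarith
            · have hz : μ2 S = 0 := by
                simp only [hμ2def]; exact ind_neg _ (fun hcc => hc hcc.1)
              have := (hν₁b S).1; have := (hν₂b S).1
              linarith
          · show ∑ S : Finset V, (ν₁ S + ν₂ S) = t
            rw [Finset.sum_add_distrib, hν₁s, hν₂s]; ring
          · intro S hS
            dsimp only at hS
            have hcase : ν₁ S ≠ 0 ∨ ν₂ S ≠ 0 := by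
              by_contra h
              push_neg at h
              exact hS (by rw [h.1, h.2]; ring)
            have hμ'ne : μ' S ≠ 0 := by
              rcases hcase with h | h
              · exact (hν₁supp S h).2
              · exact (hν₂supp S h).2
            have hSU : S ⊆ U := (hsupp' S hμ'ne).2.trans (Finset.erase_subset v U)
            have hdeg : ∀ a ∈ S, ∀ b ∈ S, G.Adj v a → G.Adj v b → a = b := by
              intro a ha b hb hva hvb
              rw [honly a (hSU ha) hva, honly b (hSU hb) hvb]
            apply insert_co2plex (hsupp' S hμ'ne).1 v hdeg
            intro u hu hvu
            have huw : u = w := honly u (hSU hu) hvu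
            subst huw
            rcases hcase with h | h
            · exact (hν₁supp S h).1.2
            · exact absurd hu (hν₂supp S h).1
          · intro u hadj
            show ∑ S : Finset V, ind (u ∈ S) (ν₁ S + ν₂ S) = max 0 (t + x u - 1)
            by_cases huw : u = w
            · subst huw
              have e6 : ∑ S : Finset V, ind (u ∈ S) (ν₂ S) = 0 := by
                apply Finset.sum_eq_zero
                intro S _
                by_cases hS : u ∈ S
                · rw [ind_pos _ hS]
                  by_contra h
                  exact (hν₂supp S h).1 hS
                · exact ind_neg _ hS
              have e7 : ∑ S : Finset V, ind (u ∈ S) (ν₁ S) = m := by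
                rw [sum_ind_all ν₁ (fun S => u ∈ S) ?_, hν₁s]
                intro S hS
                by_contra h
                exact hS (hν₁supp S h).1.1
              have eadd : ∀ S : Finset V, ind (u ∈ S) (ν₁ S + ν₂ S)
                  = ind (u ∈ S) (ν₁ S) + ind (u ∈ S) (ν₂ S) := by
                intro S; unfold ind; split <;> ring
              rw [Finset.sum_congr rfl (fun S _ => eadd S), Finset.sum_add_distrib, e6, e7,
                hmdef]
              ring_nf
            · have huU : u ∉ U := fun h => huw (honly u h hadj)
              have hxu : x u = 0 := hx0 u huU
              rw [hxu]
              have hmax : max 0 (t + 0 - 1) = 0 := max_eq_left (by linarith)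
              rw [hmax]
              apply Finset.sum_eq_zero
              intro S _
              by_cases hS : u ∈ S
              · rw [ind_pos _ hS]
                by_contra h
                have hcase : ν₁ S ≠ 0 ∨ ν₂ S ≠ 0 := by
                  by_contra hh
                  push_neg at hh
                  exact h (by rw [hh.1, hh.2]; ring)
                have hμ'ne : μ' S ≠ 0 := by
                  rcases hcase with hh | hh
                  · exact (hν₁supp S hh).2
                  · exact (hν₂supp S hh).2
                exact huU ((hsupp' S hμ'ne).2.trans (Finset.erase_subset v U) hS)
              · exact ind_neg _ hS
      -- common construction from ρ
      obtain ⟨ρ, hρb, hρsum, hρco, hρedge⟩ := hρex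
      have hρv : ∀ S : Finset V, v ∈ S → ρ S = 0 := by
        intro S hv
        exact le_antisymm ((hμ'v S hv) ▸ (hρb S).2) (hρb S).1
      set μ : Finset V → ℝ :=
        fun S => ind (v ∈ S) (ρ (S.erase v)) + ind (v ∉ S) (μ' S - ρ S) with hμdef
      -- pointwise identities
      have hμsplit : ∀ (q : Finset V → Prop) (S : Finset V), ind (q S) (μ S)
          = ind (v ∈ S ∧ q S) (ρ (S.erase v)) + ind (v ∉ S ∧ q S) (μ' S - ρ S) := by
        intro q S
        simp only [hμdef, ind]
        by_cases hv : v ∈ S <;> by_cases hq : q S <;> simp [hv, hq]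
      have hμtot : ∀ S : Finset V, μ S
          = ind (v ∈ S) (ρ (S.erase v)) + ind (v ∉ S) (μ' S - ρ S) := by
        intro S; simp only [hμdef]
      have etot1 : ∑ S : Finset V, ind (v ∈ S) (ρ (S.erase v)) = t := by
        rw [sum_ind_erase' v ρ,
          sum_ind_all ρ (fun S => v ∉ S) (fun S h => hρv S (not_not.mp h)), hρsum]
      have etot2 : ∑ S : Finset V, ind (v ∉ S) (μ' S - ρ S) = 1 - t := by
        rw [sum_ind_all (fun S => μ' S - ρ S) (fun S => v ∉ S) ?_]
        · rw [Finset.sum_sub_distrib, hsum', hρsum]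
        · intro S h
          have hv := not_not.mp h
          show μ' S - ρ S = 0
          rw [hμ'v S hv, hρv S hv]; ring
      refine ⟨μ, ?_, ?_, ?_, ?_, ?_⟩
      · intro S
        rw [hμtot S]
        exact add_nonneg (ind_nonneg (hρb _).1) (ind_nonneg (by linarith [(hρb S).2]))
      · rw [Finset.sum_congr rfl (fun S _ => hμtot S), Finset.sum_add_distrib, etot1, etot2]
        ring
      · -- support
        intro S hS
        by_cases hvS : v ∈ S
        · have hμeq : μ S = ρ (S.erase v) := by
            rw [hμtot S, ind_pos _ hvS, ind_neg _ (not_not_intro hvS)]; ring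
          rw [hμeq] at hS
          have hμ'ne : μ' (S.erase v) ≠ 0 := by
            intro h
            exact hS (le_antisymm (h ▸ (hρb _).2) (hρb _).1)
          constructor
          · have h := hρco _ hS
            rwa [Finset.insert_erase hvS] at h
          · intro z hz
            by_cases h : z = v
            · subst h; exact hvU
            · exact Finset.erase_subset v U
                ((hsupp' _ hμ'ne).2 (Finset.mem_erase.mpr ⟨h, hz⟩))
        · have hμeq : μ S = μ' S - ρ S := by
            rw [hμtot S, ind_neg _ hvS, ind_pos _ hvS]; ring
          rw [hμeq] at hS
          have hμ'ne : μ' S ≠ 0 := by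
            intro h
            apply hS
            have hz : ρ S = 0 := le_antisymm (h ▸ (hρb S).2) (hρb S).1
            rw [h, hz]; ring
          exact ⟨(hsupp' S hμ'ne).1, (hsupp' S hμ'ne).2.trans (Finset.erase_subset v U)⟩
      · -- marginals
        intro u
        rw [sum_filter_ind _ _ μ]
        by_cases huv : u = v
        · subst huv
          have hpt : ∀ S : Finset V, ind (u ∈ S) (μ S) = ind (u ∈ S) (ρ (S.erase u)) := by
            intro S
            by_cases hv : u ∈ S
            · rw [ind_pos _ hv, ind_pos _ hv, hμtot S, ind_pos _ hv,
                ind_neg _ (not_not_intro hv)]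
              ring
            · rw [ind_neg _ hv, ind_neg _ hv]
          rw [Finset.sum_congr rfl (fun S _ => hpt S), etot1]
        · have hpu : ∀ S : Finset V, v ∈ S → ((u ∈ S) ↔ (u ∈ S.erase v)) := by
            intro S _
            rw [Finset.mem_erase]
            exact ⟨fun h => ⟨huv, h⟩, fun h => h.2⟩
          rw [Finset.sum_congr rfl (fun S _ => hμsplit (fun T => u ∈ T) S),
            Finset.sum_add_distrib]
          rw [sum_ind_erase v (fun T => u ∈ T) ρ hpu]
          rw [← Finset.sum_add_distrib]
          have hcomb : ∀ S : Finset V, ind (v ∉ S ∧ u ∈ S) (ρ S)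
              + ind (v ∉ S ∧ u ∈ S) (μ' S - ρ S) = ind (u ∈ S ∧ v ∉ S) (μ' S) := by
            intro S
            by_cases h : v ∉ S ∧ u ∈ S
            · rw [ind_pos _ h, ind_pos _ h, ind_pos _ (and_comm.mp h)]; ring
            · rw [ind_neg _ h, ind_neg _ h, ind_neg _ (fun hc => h (and_comm.mp hc))]; ring
          rw [Finset.sum_congr rfl (fun S _ => hcomb S)]
          rw [sum_ind_drop μ' (fun S => u ∈ S) (fun S => v ∉ S)
            (fun S _ h => hμ'v S (not_not.mp h))]
          rw [hmargI u, hx'ne u huv]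
      · -- edge sums
        intro u₁ u₂ hadj
        have hne12 : u₁ ≠ u₂ := hadj.ne
        rw [sum_filter_ind _ _ μ]
        by_cases h1v : u₁ = v
        · subst h1v
          have h2v : u₂ ≠ u₁ := hne12.symm
          have hpt : ∀ S : Finset V, ind (u₁ ∈ S ∧ u₂ ∈ S) (μ S)
              = ind (u₁ ∈ S ∧ u₂ ∈ S) (ρ (S.erase u₁)) := by
            intro S
            by_cases h : u₁ ∈ S ∧ u₂ ∈ S
            · rw [ind_pos _ h, ind_pos _ h, hμtot S, ind_pos _ h.1,
                ind_neg _ (not_not_intro h.1)]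
              ring
            · rw [ind_neg _ h, ind_neg _ h]
          have hpu : ∀ S : Finset V, u₁ ∈ S → ((u₂ ∈ S) ↔ (u₂ ∈ S.erase u₁)) := by
            intro S _
            rw [Finset.mem_erase]
            exact ⟨fun h => ⟨h2v, h⟩, fun h => h.2⟩
          rw [Finset.sum_congr rfl (fun S _ => hpt S),
            sum_ind_erase u₁ (fun T => u₂ ∈ T) ρ hpu]
          have hcm : ∀ S : Finset V, ind (u₁ ∉ S ∧ u₂ ∈ S) (ρ S)
              = ind (u₂ ∈ S ∧ u₁ ∉ S) (ρ S) := fun S => ind_congr _ and_comm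
          rw [Finset.sum_congr rfl (fun S _ => hcm S),
            sum_ind_drop ρ (fun S => u₂ ∈ S) (fun S => u₁ ∉ S)
              (fun S _ h => hρv S (not_not.mp h)),
            hρedge u₂ hadj, htdef]
        · by_cases h2v : u₂ = v
          · subst h2v
            have hpt : ∀ S : Finset V, ind (u₁ ∈ S ∧ u₂ ∈ S) (μ S)
                = ind (u₂ ∈ S ∧ u₁ ∈ S) (ρ (S.erase u₂)) := by
              intro S
              by_cases h : u₁ ∈ S ∧ u₂ ∈ S
              · rw [ind_pos _ h, ind_pos _ (and_comm.mp h), hμtot S, ind_pos _ h.2,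
                  ind_neg _ (not_not_intro h.2)]
                ring
              · rw [ind_neg _ h, ind_neg _ (fun hc => h (and_comm.mp hc))]
            have hpu : ∀ S : Finset V, u₂ ∈ S → ((u₁ ∈ S) ↔ (u₁ ∈ S.erase u₂)) := by
              intro S _
              rw [Finset.mem_erase]
              exact ⟨fun h => ⟨h1v, h⟩, fun h => h.2⟩
            rw [Finset.sum_congr rfl (fun S _ => hpt S),
              sum_ind_erase u₂ (fun T => u₁ ∈ T) ρ hpu]
            have hcm : ∀ S : Finset V, ind (u₂ ∉ S ∧ u₁ ∈ S) (ρ S)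
                = ind (u₁ ∈ S ∧ u₂ ∉ S) (ρ S) := fun S => ind_congr _ and_comm
            rw [Finset.sum_congr rfl (fun S _ => hcm S),
              sum_ind_drop ρ (fun S => u₁ ∈ S) (fun S => u₂ ∉ S)
                (fun S _ h => hρv S (not_not.mp h)),
              hρedge u₁ hadj.symm, htdef]
            rw [show x u₁ + x u₂ - 1 = x u₂ + x u₁ - 1 from by ring]
          · have hpu : ∀ S : Finset V, v ∈ S →
                ((u₁ ∈ S ∧ u₂ ∈ S) ↔ (u₁ ∈ S.erase v ∧ u₂ ∈ S.erase v)) := by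
              intro S _
              rw [Finset.mem_erase, Finset.mem_erase]
              exact ⟨fun h => ⟨⟨h1v, h.1⟩, ⟨h2v, h.2⟩⟩, fun h => ⟨h.1.2, h.2.2⟩⟩
            rw [Finset.sum_congr rfl
                (fun S _ => hμsplit (fun T => u₁ ∈ T ∧ u₂ ∈ T) S),
              Finset.sum_add_distrib,
              sum_ind_erase v (fun T => u₁ ∈ T ∧ u₂ ∈ T) ρ hpu,
              ← Finset.sum_add_distrib]
            have hcomb : ∀ S : Finset V, ind (v ∉ S ∧ (u₁ ∈ S ∧ u₂ ∈ S)) (ρ S)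
                + ind (v ∉ S ∧ (u₁ ∈ S ∧ u₂ ∈ S)) (μ' S - ρ S)
                = ind ((u₁ ∈ S ∧ u₂ ∈ S) ∧ v ∉ S) (μ' S) := by
              intro S
              by_cases h : v ∉ S ∧ (u₁ ∈ S ∧ u₂ ∈ S)
              · rw [ind_pos _ h, ind_pos _ h, ind_pos _ (and_comm.mp h)]; ring
              · rw [ind_neg _ h, ind_neg _ h, ind_neg _ (fun hc => h (and_comm.mp hc))]
                ring
            rw [Finset.sum_congr rfl (fun S _ => hcomb S),
              sum_ind_drop μ' (fun S => u₁ ∈ S ∧ u₂ ∈ S) (fun S => v ∉ S)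
                (fun S _ h => hμ'v S (not_not.mp h)),
              hedgeI u₁ u₂ hadj, hx'ne u₁ h1v, hx'ne u₂ h2v]

end Stmt11Aux

open Stmt11Aux in
/-- For a tree, the co-2-plex polytope equals T(G). -/
theorem stmt11 (G : SimpleGraph V) [DecidableRel G.Adj] (htree : G.IsTree) :
    co2PlexPolytope G = TPoly G := by
  apply Set.Subset.antisymm
  · apply convexHull_min _ (convex_TPoly G)
    rintro y ⟨S, hS, rfl⟩
    exact chiV_mem_TPoly G hS
  · intro x hx
    obtain ⟨μ, h0, h1, h2, h3, -⟩ :=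
      key G htree.2 Finset.univ x hx (by simp)
    have hxeq : x = (univ.filter (fun S : Finset V => μ S ≠ 0)).centerMass μ (fun S => chiV S) := by
      unfold Finset.centerMass
      have hw : ∑ S ∈ univ.filter (fun S : Finset V => μ S ≠ 0), μ S = 1 := by
        rw [Finset.sum_filter_ne_zero, h1]
      rw [hw, inv_one, one_smul]
      have hext : ∑ S ∈ univ.filter (fun S : Finset V => μ S ≠ 0), μ S • chiV S
          = ∑ S : Finset V, μ S • chiV S := by
        apply Finset.sum_filter_of_ne
        intro S _ h hS
        apply h; rw [hS, zero_smul]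
      rw [hext]
      funext v
      rw [Finset.sum_apply]
      have : ∀ S : Finset V, (μ S • chiV S) v = if v ∈ S then μ S else 0 := by
        intro S; unfold chiV
        by_cases h : v ∈ S <;> simp [h]
      rw [Finset.sum_congr rfl (fun S _ => this S), ← Finset.sum_filter, h3 v]
    rw [hxeq]
    apply Finset.centerMass_mem_convexHull
    · intro S _; exact h0 S
    · rw [Finset.sum_filter_ne_zero, h1]; norm_num
    · intro S hS
      exact ⟨S, (h2 S (Finset.mem_filter.mp hS).2).1, rfl⟩

end
end

section
/- Let G=(V,E) be a finite simple graph and K a 2-plex of G. Then K can be partitioned into two sets K₁ and K₂ such that K₁ and K₂ are both cliques of G and both [K₁, E(K₂)] and [K₂, E(K₁)] are utter cliques of G. -/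
open Finset
open scoped Classical

noncomputable section

variable {V : Type*} [Fintype V]

/-- In a 2-plex, each vertex has at most one non-neighbor within K. -/
lemma nonnbr_unique (G : SimpleGraph V) (K : Finset V) (hK : Is2Plex G K)
    {v a b : V} (hv : v ∈ K) (ha : a ∈ K) (hb : b ∈ K)
    (hav : a ≠ v) (hna : ¬ G.Adj v a) (hbv : b ≠ v) (hnb : ¬ G.Adj v b) : a = b := by
  classical
  set S : Finset V := (K.filter fun u => ¬ G.Adj v u).erase v with hS
  have hcard : (K.filter fun u => G.Adj v u).card + (K.filter fun u => ¬ G.Adj v u).card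
      = K.card := Finset.card_filter_add_card_filter_not _
  have hvmem : v ∈ K.filter fun u => ¬ G.Adj v u := by
    simp [hv, G.irrefl]
  have hScard : S.card + 1 = (K.filter fun u => ¬ G.Adj v u).card := by
    rw [hS, Finset.card_erase_of_mem hvmem]
    have : 1 ≤ (K.filter fun u => ¬ G.Adj v u).card := Finset.card_pos.mpr ⟨v, hvmem⟩
    omega
  have hK2 := hK v hv
  have hS1 : S.card ≤ 1 := by omega
  have haS : a ∈ S := by simp [hS, hav, ha, hna]
  have hbS : b ∈ S := by simp [hS, hbv, hb, hnb]
  exact Finset.card_le_one.mp hS1 a haS b hbS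

lemma utter_aux (G : SimpleGraph V) (K : Finset V) (hK : Is2Plex G K)
    (K₁ K₂ : Finset V) (h1 : K₁ ⊆ K) (h2 : K₂ ⊆ K) (hd : Disjoint K₁ K₂)
    (hc1 : G.IsClique (K₁ : Set V)) (hc2 : G.IsClique (K₂ : Set V)) :
    IsUtterClique G K₁ (edgesIn G K₂) := by
  classical
  intro x hx y hy hxy
  have hmem : ∀ {z : V ⊕ G.edgeSet},
      z ∈ Sum.inl '' (K₁ : Set V) ∪ Sum.inr '' ((edgesIn G K₂ : Finset G.edgeSet) : Set G.edgeSet) →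
      (∃ v ∈ K₁, z = Sum.inl v) ∨ (∃ e : G.edgeSet, (∀ w ∈ (e : Sym2 V), w ∈ K₂) ∧ z = Sum.inr e) := by
    intro z hz
    rcases hz with ⟨v, hv, rfl⟩ | ⟨e, he, rfl⟩
    · exact Or.inl ⟨v, hv, rfl⟩
    · right
      refine ⟨e, ?_, rfl⟩
      have : e ∈ edgesIn G K₂ := he
      simpa [edgesIn] using this
  -- helper: a vertex of K₁ is adjacent (in utter graph sense) to an edge inside K₂
  have hVE : ∀ (w : V), w ∈ K₁ → ∀ (e : G.edgeSet), (∀ u ∈ (e : Sym2 V), u ∈ K₂) →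
      w ∈ (e : Sym2 V) ∨ ∃ z ∈ (e : Sym2 V), G.Adj w z := by
    intro w hw e he
    obtain ⟨s, hs⟩ := e
    induction s using Sym2.ind with
    | _ a b =>
      have hadj : G.Adj a b := hs
      have haK : a ∈ K₂ := he a (by simp)
      have hbK : b ∈ K₂ := he b (by simp)
      have hwa : w ≠ a := fun h => (Finset.disjoint_left.mp hd hw) (h ▸ haK)
      have hwb : w ≠ b := fun h => (Finset.disjoint_left.mp hd hw) (h ▸ hbK)
      by_cases hA : G.Adj w a
      · exact Or.inr ⟨a, by simp, hA⟩
      by_cases hB : G.Adj w b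
      · exact Or.inr ⟨b, by simp, hB⟩
      exact absurd (nonnbr_unique G K hK (h1 hw) (h2 haK) (h2 hbK)
        (fun h => hwa h.symm) hA (fun h => hwb h.symm) hB ▸ hadj) (G.irrefl)
  rcases hmem hx with ⟨u, hu, rfl⟩ | ⟨e, he, rfl⟩ <;>
    rcases hmem hy with ⟨v, hv, rfl⟩ | ⟨f, hf, rfl⟩
  · exact hc1 hu hv (fun h => hxy (by rw [h]))
  · exact hVE u hu f hf
  · exact hVE v hv e he
  · -- two edges inside K₂
    refine ⟨fun h => hxy (by rw [h]), ?_⟩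
    obtain ⟨s, hs⟩ := e
    obtain ⟨t, ht⟩ := f
    induction s using Sym2.ind with
    | _ a b =>
    induction t using Sym2.ind with
    | _ c d =>
      have haK : a ∈ K₂ := he a (by simp)
      have hcK : c ∈ K₂ := hf c (by simp)
      by_cases hac : a = c
      · exact Or.inl ⟨a, by simp, by simp [hac]⟩
      · exact Or.inr ⟨a, by simp, c, by simp, hc2 haK hcK hac⟩

/-- Every 2-plex K can be partitioned into two cliques K₁, K₂
such that [K₁, E(K₂)] and [K₂, E(K₁)] are utter cliques. -/
theorem stmt18 (G : SimpleGraph V) (K : Finset V) (hK : Is2Plex G K) :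
    ∃ K₁ K₂ : Finset V, K₁ ∪ K₂ = K ∧ Disjoint K₁ K₂ ∧
      G.IsClique (K₁ : Set V) ∧ G.IsClique (K₂ : Set V) ∧
      IsUtterClique G K₁ (edgesIn G K₂) ∧ IsUtterClique G K₂ (edgesIn G K₁) := by
  classical
  let σ := Fintype.equivFin V
  set K₁ : Finset V := K.filter (fun v => ∀ u ∈ K, u ≠ v → ¬ G.Adj v u → σ v < σ u) with hK₁
  set K₂ : Finset V := K \ K₁ with hK₂
  have h1 : K₁ ⊆ K := Finset.filter_subset _ _
  have h2 : K₂ ⊆ K := Finset.sdiff_subset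
  have hd : Disjoint K₁ K₂ := Finset.disjoint_sdiff
  have hunion : K₁ ∪ K₂ = K := Finset.union_sdiff_of_subset h1
  have hc1 : G.IsClique (K₁ : Set V) := by
    intro a ha b hb hab
    simp only [hK₁, Finset.coe_filter, Set.mem_setOf_eq] at ha hb
    by_contra hn
    have h1 := ha.2 b hb.1 (Ne.symm hab) hn
    have h2 := hb.2 a ha.1 hab (fun h => hn (G.adj_symm h))
    omega
  have hc2 : G.IsClique (K₂ : Set V) := by
    intro a ha b hb hab
    simp only [hK₂, Finset.coe_sdiff, Set.mem_diff, Finset.mem_coe, hK₁,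
      Finset.mem_filter, not_and, not_forall] at ha hb
    by_contra hn
    obtain ⟨u, hu, huv, hnu, hlt⟩ := ha.2 ha.1
    obtain ⟨w, hw, hwv, hnw, hlt'⟩ := hb.2 hb.1
    have hub : u = b :=
      nonnbr_unique G K hK ha.1 hu hb.1 huv hnu (Ne.symm hab) hn
    have hwa : w = a :=
      nonnbr_unique G K hK hb.1 hw ha.1 hwv hnw hab (fun h => hn (G.adj_symm h))
    subst hub; subst hwa
    exact hab (σ.injective (le_antisymm (not_lt.mp hlt') (not_lt.mp hlt)))
  exact ⟨K₁, K₂, hunion, hd, hc1, hc2,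
    utter_aux G K hK K₁ K₂ h1 h2 hd hc1 hc2,
    utter_aux G K hK K₂ K₁ h2 h1 hd.symm hc2 hc1⟩

end
end
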